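/- arXiv:math/0101188 — 4 statements merged into one kernel-verified Lean document; each statement's English description precedes it below -/
import Mathlib

section
/- For real ν and x > 0, the derivative of ρ_(ν+1) satisfies ρ_(ν+1)'(x) = -ρ_ν(x), where ρ_ν(x) = ∫₀^∞ t^(ν-1) e^(-t - x/t) dt. -/
open MeasureTheory Real Set

noncomputable def rho (ν x : ℝ) : ℝ :=
  ∫ t in Set.Ioi (0:ℝ), t ^ (ν - 1) * Real.exp (-t - x / t)

noncomputable def K (ν z : ℝ) : ℝ :=
  (1/2) * (z/2) ^ ν * ∫ t in Set.Ioi (0:ℝ), Real.exp (-t - z^2 / (4*t)) * t ^ (-ν - 1)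

lemma bounded_aux (s c : ℝ) (hc : 0 < c) :
    ∃ C : ℝ, ∀ t ∈ Ioi (0:ℝ), t ^ s * (Real.exp (-(t/2)) * Real.exp (-(c/(2*t)))) ≤ C := by
  set n : ℕ := ⌈|s|⌉₊ with hn
  refine ⟨max (2^n * n.factorial) (n.factorial * (2/c)^n), fun t ht => ?_⟩
  have ht0 : (0:ℝ) < t := ht
  have hsn : |s| ≤ (n : ℝ) := Nat.le_ceil _
  rcases le_or_gt 1 t with h1 | h1
  · -- t ≥ 1 : use t^s ≤ t^n ≤ 2^n n! exp(t/2)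
    refine le_trans ?_ (le_max_left _ _)
    have hts : t ^ s ≤ t ^ (n:ℝ) :=
      Real.rpow_le_rpow_of_exponent_le h1 (le_trans (le_abs_self s) hsn)
    have hE : (t/2)^n / (n.factorial : ℝ) ≤ Real.exp (t/2) :=
      Real.pow_div_factorial_le_exp _ (by positivity) n
    have hfac : t ^ (n:ℝ) ≤ 2^n * (n.factorial : ℝ) * Real.exp (t/2) := by
      rw [Real.rpow_natCast]
      have h2 : (t/2)^n ≤ (n.factorial : ℝ) * Real.exp (t/2) := by
        rw [div_le_iff₀ (by positivity)] at hE
        linarith [hE]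
      calc t^n = 2^n * (t/2)^n := by rw [div_pow]; field_simp
        _ ≤ 2^n * ((n.factorial : ℝ) * Real.exp (t/2)) := by
            apply mul_le_mul_of_nonneg_left h2 (by positivity)
        _ = 2^n * (n.factorial : ℝ) * Real.exp (t/2) := by ring
    have hexp1 : Real.exp (-(c/(2*t))) ≤ 1 := Real.exp_le_one_iff.mpr (neg_nonpos.mpr (by positivity))
    calc t ^ s * (Real.exp (-(t/2)) * Real.exp (-(c/(2*t))))
        ≤ (2^n * (n.factorial : ℝ) * Real.exp (t/2)) * (Real.exp (-(t/2)) * 1) := by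
          apply mul_le_mul (le_trans hts hfac) ?_ (by positivity) (by positivity)
          exact mul_le_mul_of_nonneg_left hexp1 (Real.exp_pos _).le
      _ = 2^n * (n.factorial : ℝ) * (Real.exp (t/2) * Real.exp (-(t/2))) := by ring
      _ = 2^n * (n.factorial : ℝ) := by rw [← Real.exp_add]; simp
  · -- t < 1 : use t^s ≤ t^(-n) and exp(-(c/(2t))) ≤ n! (2t/c)^n
    refine le_trans ?_ (le_max_right _ _)
    have hts : t ^ s ≤ t ^ (-(n:ℝ)) := by
      apply Real.rpow_le_rpow_of_exponent_ge ht0 h1.le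
      linarith [neg_abs_le s]
    have hE : (c/(2*t))^n / (n.factorial : ℝ) ≤ Real.exp (c/(2*t)) :=
      Real.pow_div_factorial_le_exp _ (by positivity) n
    have hexp : Real.exp (-(c/(2*t))) ≤ (n.factorial : ℝ) * (2*t/c)^n := by
      rw [Real.exp_neg]
      have hinv : (Real.exp (c/(2*t)))⁻¹ ≤ ((c/(2*t))^n / (n.factorial : ℝ))⁻¹ :=
        inv_anti₀ (by positivity) hE
      refine hinv.trans (le_of_eq ?_)
      rw [inv_div, div_pow]
      field_simp
      rw [← mul_pow]; congr 1; field_simp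
    have hexp1 : Real.exp (-(t/2)) ≤ 1 := Real.exp_le_one_iff.mpr (neg_nonpos.mpr (by positivity))
    have htn : t ^ (-(n:ℝ)) = (t^n)⁻¹ := by
      rw [Real.rpow_neg ht0.le, Real.rpow_natCast]
    calc t ^ s * (Real.exp (-(t/2)) * Real.exp (-(c/(2*t))))
        ≤ t ^ (-(n:ℝ)) * (1 * ((n.factorial : ℝ) * (2*t/c)^n)) := by
          apply mul_le_mul hts ?_ (by positivity) (by positivity)
          exact mul_le_mul hexp1 hexp (Real.exp_pos _).le zero_le_one
      _ = (t^n)⁻¹ * ((n.factorial : ℝ) * ((2*t)^n / c^n)) := by rw [htn, div_pow]; ring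
      _ = (n.factorial : ℝ) * (2/c)^n := by
          rw [mul_pow, div_pow]
          field_simp

lemma continuousOn_aux (s c : ℝ) :
    ContinuousOn (fun t : ℝ => t ^ s * Real.exp (-t - c / t)) (Ioi (0:ℝ)) := by
  apply ContinuousOn.mul
  · exact fun t ht => (Real.continuousAt_rpow_const t s (Or.inl (ne_of_gt ht))).continuousWithinAt
  · apply Real.continuous_exp.comp_continuousOn
    exact (continuous_neg.continuousOn).sub
      (continuousOn_const.div continuousOn_id fun t ht => ne_of_gt ht)

lemma integrable_aux (s c : ℝ) (hc : 0 < c) :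
    IntegrableOn (fun t => t ^ s * Real.exp (-t - c / t)) (Ioi (0:ℝ)) := by
  obtain ⟨C, hC⟩ := bounded_aux s c hc
  have hC0 : 0 ≤ C := le_trans (by positivity) (hC 1 (by norm_num))
  have hmeas : AEStronglyMeasurable (fun t : ℝ => t ^ s * Real.exp (-t - c / t))
      (volume.restrict (Ioi 0)) :=
    (continuousOn_aux s c).aestronglyMeasurable measurableSet_Ioi
  have hg : IntegrableOn (fun t : ℝ => C * Real.exp (-(1/2) * t)) (Ioi (0:ℝ)) :=
    (exp_neg_integrableOn_Ioi 0 (by norm_num : (0:ℝ) < 1/2)).const_mul C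
  apply Integrable.mono' hg hmeas
  rw [ae_restrict_iff' measurableSet_Ioi]
  filter_upwards with t ht
  have ht0 : (0:ℝ) < t := ht
  have hsplit : Real.exp (-t - c / t)
      = (Real.exp (-(t/2)) * Real.exp (-(c/(2*t)))) * (Real.exp (-(t/2)) * Real.exp (-(c/(2*t)))) := by
    rw [← Real.exp_add, ← Real.exp_add]
    congr 1
    field_simp
    ring
  have hnorm : ‖t ^ s * Real.exp (-t - c / t)‖ = t ^ s * Real.exp (-t - c / t) := by
    rw [Real.norm_eq_abs, abs_of_nonneg (by positivity)]
  rw [hnorm, hsplit, ← mul_assoc]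
  have h1 : t ^ s * (Real.exp (-(t/2)) * Real.exp (-(c/(2*t)))) ≤ C := hC t ht
  have h2 : Real.exp (-(t/2)) * Real.exp (-(c/(2*t))) ≤ Real.exp (-(1/2) * t) := by
    have : Real.exp (-(c/(2*t))) ≤ 1 := Real.exp_le_one_iff.mpr (neg_nonpos.mpr (by positivity))
    calc Real.exp (-(t/2)) * Real.exp (-(c/(2*t))) ≤ Real.exp (-(t/2)) * 1 :=
          mul_le_mul_of_nonneg_left this (Real.exp_pos _).le
      _ = Real.exp (-(1/2) * t) := by rw [mul_one]; congr 1; ring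
  exact mul_le_mul h1 h2 (by positivity) hC0

theorem rho_succ_deriv (ν x : ℝ) (hx : 0 < x) :
    HasDerivAt (fun y => rho (ν + 1) y) (-(rho ν x)) x := by
  have hx2 : 0 < x / 2 := by positivity
  have key := hasDerivAt_integral_of_dominated_loc_of_deriv_le
    (F := fun y t => t ^ ν * Real.exp (-t - y / t))
    (F' := fun y t => -(t ^ (ν - 1) * Real.exp (-t - y / t)))
    (x₀ := x) (s := Metric.ball x (x / 2)) (μ := volume.restrict (Ioi 0))
    (bound := fun t => t ^ (ν - 1) * Real.exp (-t - (x/2) / t))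
    (Metric.ball_mem_nhds x hx2)
    (Filter.Eventually.of_forall fun y =>
      (continuousOn_aux ν y).aestronglyMeasurable measurableSet_Ioi)
    (integrable_aux ν x hx)
    (((continuousOn_aux (ν - 1) x).neg).aestronglyMeasurable measurableSet_Ioi)
    ?_ (integrable_aux (ν - 1) (x/2) hx2) ?_
  · have h1 : (fun y => rho (ν + 1) y) = fun y => ∫ t in Ioi (0:ℝ), t ^ ν * Real.exp (-t - y / t) := by
      funext y
      simp only [rho, add_sub_cancel_right]
    have h2 : (∫ t in Ioi (0:ℝ), -(t ^ (ν - 1) * Real.exp (-t - x / t))) = -(rho ν x) := by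
      rw [integral_neg]; rfl
    rw [h1]
    rw [← h2]
    exact key.2
  · -- bound
    rw [ae_restrict_iff' measurableSet_Ioi]
    filter_upwards with t ht
    intro y hy
    have ht0 : (0:ℝ) < t := ht
    have hy2 : x / 2 ≤ y := by
      have := abs_lt.mp (mem_ball_iff_norm.mp hy)
      linarith [this.1]
    rw [norm_neg, Real.norm_eq_abs, abs_of_nonneg (by positivity)]
    apply mul_le_mul_of_nonneg_left _ (by positivity)
    apply Real.exp_le_exp.mpr
    have hdiv : x / 2 / t ≤ y / t := by gcongr
    linarith [hdiv]

  · -- differentiability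
    rw [ae_restrict_iff' measurableSet_Ioi]
    filter_upwards with t ht
    intro y hy
    have ht0 : (0:ℝ) < t := ht
    have hd : HasDerivAt (fun y : ℝ => -t - y / t) (-(1/t)) y := by
      simpa using ((hasDerivAt_id y).div_const t).const_sub (-t)
    have hD := ((hd.exp).const_mul (t ^ ν))
    have heq : t ^ ν * (Real.exp (-t - y / t) * -(1 / t)) = -(t ^ (ν - 1) * Real.exp (-t - y / t)) := by
      rw [Real.rpow_sub_one (ne_of_gt ht0)]
      field_simp
    exact heq ▸ hD
end

section
/- For real ν and x > 0, the function ρ_ν satisfies the second-order differential equation (x^(ν+1) (x^(-ν) ρ_ν(x))')' = ρ_ν(x), where ρ_ν(x) = ∫₀^∞ t^(ν-1) e^(-t - x/t) dt. -/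
open MeasureTheory Real Set

open Filter Topology

noncomputable def J (a x : ℝ) : ℝ :=
  ∫ t in Set.Ioi (0:ℝ), t ^ a * Real.exp (-t - x / t)

lemma measAux (a x : ℝ) :
    AEStronglyMeasurable (fun t : ℝ => t ^ a * Real.exp (-t - x / t))
      ((volume : Measure ℝ).restrict (Ioi 0)) := by
  apply ContinuousOn.aestronglyMeasurable _ measurableSet_Ioi
  apply ContinuousOn.mul
  · exact continuousOn_id.rpow_const (fun t ht => Or.inl (ne_of_gt ht))
  · exact Real.continuous_exp.comp_continuousOn
      (continuousOn_id.neg.sub (continuousOn_const.div continuousOn_id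
        (fun t ht => ne_of_gt ht)))

lemma integrableAux (a : ℝ) {x : ℝ} (hx : 0 < x) :
    IntegrableOn (fun t : ℝ => t ^ a * Real.exp (-t - x / t)) (Ioi 0) := by
  set n : ℕ := ⌈|a|⌉₊ with hn
  have han : 0 ≤ a + n := by
    have h1 : |a| ≤ (n : ℝ) := Nat.le_ceil _
    have := neg_abs_le a
    linarith
  have hint : IntegrableOn
      (fun t : ℝ => (n.factorial : ℝ) / x ^ n * (t ^ (a + n) * Real.exp (-t))) (Ioi 0) := by
    apply Integrable.const_mul
    have h := Real.GammaIntegral_convergent (s := a + n + 1) (by linarith)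
    have : (fun t : ℝ => t ^ (a + n) * Real.exp (-t))
        = fun t : ℝ => Real.exp (-t) * t ^ (a + (n:ℝ) + 1 - 1) := by
      funext t; ring_nf
    rw [this]
    exact h
  refine Integrable.mono' hint (measAux a x) ?_
  filter_upwards [ae_restrict_mem measurableSet_Ioi] with t ht
  have ht0 : (0:ℝ) < t := ht
  have h1 : Real.exp (-t - x / t) = Real.exp (-(x/t)) * Real.exp (-t) := by
    rw [← Real.exp_add]; ring_nf
  have h2 : Real.exp (-(x/t)) ≤ (n.factorial : ℝ) * t ^ n / x ^ n := by
    have hxt : 0 ≤ x / t := le_of_lt (div_pos hx ht0)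
    have hb := Real.pow_div_factorial_le_exp (x/t) hxt n
    rw [div_pow] at hb
    have hb' : x ^ n / (t ^ n * (n.factorial:ℝ)) ≤ Real.exp (x/t) := by
      rw [← div_div]; exact hb
    have hxpow : (0:ℝ) < x ^ n / (t ^ n * (n.factorial:ℝ)) := by positivity
    have hinv := inv_anti₀ hxpow hb'
    rw [Real.exp_neg]
    refine hinv.trans_eq ?_
    rw [inv_div]
    ring
  have h3 : t ^ a * ((n.factorial : ℝ) * t ^ (n:ℕ) / x ^ n) = (n.factorial : ℝ) / x ^ n * t ^ (a + n) := by
    rw [Real.rpow_add ht0, Real.rpow_natCast]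
    ring
  rw [Real.norm_eq_abs, abs_of_nonneg (by positivity)]
  calc t ^ a * Real.exp (-t - x / t)
      = t ^ a * Real.exp (-(x/t)) * Real.exp (-t) := by rw [h1]; ring
    _ ≤ t ^ a * ((n.factorial : ℝ) * t ^ (n:ℕ) / x ^ n) * Real.exp (-t) := by
        apply mul_le_mul_of_nonneg_right _ (Real.exp_nonneg _)
        exact mul_le_mul_of_nonneg_left h2 (Real.rpow_nonneg ht0.le a)
    _ = (n.factorial : ℝ) / x ^ n * (t ^ (a + n) * Real.exp (-t)) := by rw [h3]; ring

lemma hasDerivAt_pointwise (a : ℝ) {t : ℝ} (ht : 0 < t) (y : ℝ) :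
    HasDerivAt (fun y : ℝ => t ^ a * Real.exp (-t - y / t))
      (-(t ^ (a - 1) * Real.exp (-t - y / t))) y := by
  have h1 : HasDerivAt (fun y : ℝ => -t - y / t) (-(1/t)) y := by
    simpa using ((hasDerivAt_id y).div_const t).const_sub (-t)
  have h2 := (h1.exp).const_mul (t ^ a)
  refine h2.congr_deriv ?_
  rw [Real.rpow_sub ht, Real.rpow_one]
  field_simp

lemma hasDerivAt_J (a : ℝ) {x : ℝ} (hx : 0 < x) :
    HasDerivAt (fun y => J a y) (-(J (a - 1) x)) x := by
  have key := hasDerivAt_integral_of_dominated_loc_of_deriv_le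
    (μ := (volume : Measure ℝ).restrict (Ioi 0))
    (F := fun y t => t ^ a * Real.exp (-t - y / t))
    (F' := fun y t => -(t ^ (a - 1) * Real.exp (-t - y / t)))
    (x₀ := x) (s := Metric.ball x (x / 2))
    (bound := fun t => t ^ (a - 1) * Real.exp (-t - (x / 2) / t))
    (Metric.ball_mem_nhds x (by linarith))
    (Eventually.of_forall fun y => measAux a y)
    (integrableAux a hx)
    ((measAux (a - 1) x).neg)
    ?_ ((integrableAux (a - 1) (by linarith : (0:ℝ) < x / 2))) ?_
  · have := key.2
    rw [J, MeasureTheory.integral_neg] at *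
    exact this
  · filter_upwards [ae_restrict_mem measurableSet_Ioi] with t ht
    intro y hy
    have ht0 : (0:ℝ) < t := ht
    have hy2 : x / 2 ≤ y := by
      have := abs_lt.mp (by simpa [Real.dist_eq] using Metric.mem_ball.mp hy)
      linarith [this.1]
    rw [norm_neg, norm_mul, Real.norm_eq_abs, Real.norm_eq_abs,
      abs_of_nonneg (Real.rpow_nonneg ht0.le _), abs_of_nonneg (Real.exp_nonneg _)]
    apply mul_le_mul_of_nonneg_left _ (Real.rpow_nonneg ht0.le _)
    apply Real.exp_le_exp.mpr
    have : x / 2 / t ≤ y / t := by gcongr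
    linarith
  · filter_upwards [ae_restrict_mem measurableSet_Ioi] with t ht
    intro y _
    exact hasDerivAt_pointwise a ht y

lemma tendsto_top (a : ℝ) {x : ℝ} (hx : 0 < x) :
    Tendsto (fun t : ℝ => t ^ a * Real.exp (-t - x / t)) atTop (𝓝 0) := by
  have h1 : Tendsto (fun t : ℝ => t ^ a * Real.exp (-(1) * t)) atTop (𝓝 0) :=
    tendsto_rpow_mul_exp_neg_mul_atTop_nhds_zero a 1 one_pos
  have h2 : Tendsto (fun t : ℝ => Real.exp (-(x / t))) atTop (𝓝 1) := by
    have h0 : Tendsto (fun t : ℝ => -(x / t)) atTop (𝓝 0) := by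
      simpa using (tendsto_const_nhds.div_atTop (tendsto_id (α := ℝ))).neg
    simpa [Function.comp_def] using (Real.continuous_exp.tendsto 0).comp h0
  have h5 := h1.mul h2
  rw [zero_mul] at h5
  refine h5.congr fun t => ?_
  rw [mul_assoc, ← Real.exp_add]
  congr 1
  ring

lemma tendsto_zero (a : ℝ) {x : ℝ} (hx : 0 < x) :
    Tendsto (fun t : ℝ => t ^ a * Real.exp (-t - x / t)) (𝓝[>] (0:ℝ)) (𝓝 0) := by
  have h1 : Tendsto (fun u : ℝ => u ^ (-a) * Real.exp (-x * u)) atTop (𝓝 0) :=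
    tendsto_rpow_mul_exp_neg_mul_atTop_nhds_zero (-a) x hx
  have hinv : Tendsto (fun t : ℝ => t⁻¹) (𝓝[>] (0:ℝ)) atTop := tendsto_inv_nhdsGT_zero
  have h2 : Tendsto (fun t : ℝ => (t⁻¹) ^ (-a) * Real.exp (-x * t⁻¹)) (𝓝[>] (0:ℝ)) (𝓝 0) :=
    h1.comp hinv
  have h3 : Tendsto (fun t : ℝ => Real.exp (-t)) (𝓝[>] (0:ℝ)) (𝓝 1) := by
    have h0 : Tendsto (fun t : ℝ => -t) (𝓝 (0:ℝ)) (𝓝 0) := by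
      have : Tendsto (fun t : ℝ => t) (𝓝 (0:ℝ)) (𝓝 0) := fun s hs => hs
      simpa using this.neg
    exact (by simpa [Function.comp_def] using (Real.continuous_exp.tendsto 0).comp h0 :
      Tendsto (fun t : ℝ => Real.exp (-t)) (𝓝 (0:ℝ)) (𝓝 1)).mono_left nhdsWithin_le_nhds
  have h4 := h2.mul h3
  rw [zero_mul] at h4
  refine h4.congr' ?_
  filter_upwards [self_mem_nhdsWithin] with t (ht : (0:ℝ) < t)
  have hh : (t⁻¹) ^ (-a) = t ^ a := by
    rw [Real.inv_rpow ht.le, Real.rpow_neg ht.le, inv_inv]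
  rw [hh, mul_assoc, ← Real.exp_add]
  congr 1
  rw [div_eq_mul_inv]
  ring

lemma integral_deriv_zero {f f' : ℝ → ℝ}
    (hd : ∀ t ∈ Ioi (0:ℝ), HasDerivAt f (f' t) t)
    (hi : IntegrableOn f' (Ioi 0))
    (h0 : Tendsto f (𝓝[>] (0:ℝ)) (𝓝 0))
    (ht : Tendsto f atTop (𝓝 0)) :
    ∫ t in Ioi (0:ℝ), f' t = 0 := by
  have hd1 : ∀ t ∈ Set.Ioo (0:ℝ) 1, HasDerivAt f (f' t) t := fun t htm => hd t htm.1
  have hint01 : IntervalIntegrable f' volume 0 1 := by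
    rw [intervalIntegrable_iff_integrableOn_Ioc_of_le zero_le_one]
    exact hi.mono_set Ioc_subset_Ioi_self
  have hb1 : Tendsto f (𝓝[<] (1:ℝ)) (𝓝 (f 1)) :=
    ((hd 1 (by norm_num)).continuousAt.tendsto).mono_left nhdsWithin_le_nhds
  have h1 : ∫ t in Ioc (0:ℝ) 1, f' t = f 1 - 0 := by
    rw [← intervalIntegral.integral_of_le zero_le_one]
    exact intervalIntegral.integral_eq_sub_of_hasDerivAt_of_tendsto zero_lt_one hd1 hint01 h0 hb1
  have h2 : ∫ t in Ioi (1:ℝ), f' t = 0 - f 1 := by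
    apply MeasureTheory.integral_Ioi_of_hasDerivAt_of_tendsto
      (hd 1 (by norm_num)).continuousAt.continuousWithinAt
      (fun t htm => hd t (mem_Ioi.mpr (lt_trans zero_lt_one htm)))
      (hi.mono_set (Ioi_subset_Ioi zero_le_one)) ht
  have hsplit : Ioi (0:ℝ) = Ioc 0 1 ∪ Ioi 1 := (Ioc_union_Ioi_eq_Ioi zero_le_one).symm
  rw [hsplit, MeasureTheory.setIntegral_union (Ioc_disjoint_Ioi le_rfl) measurableSet_Ioi
    (hi.mono_set Ioc_subset_Ioi_self) (hi.mono_set (Ioi_subset_Ioi zero_le_one)), h1, h2]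
  ring

lemma J_rec (a : ℝ) {x : ℝ} (hx : 0 < x) :
    J a x = a * J (a - 1) x + x * J (a - 2) x := by
  set f : ℝ → ℝ := fun t => t ^ a * Real.exp (-t - x / t) with hf
  set f' : ℝ → ℝ := fun t =>
    a * (t ^ (a - 1) * Real.exp (-t - x / t)) - t ^ a * Real.exp (-t - x / t)
      + x * (t ^ (a - 2) * Real.exp (-t - x / t)) with hf'
  have hd : ∀ t ∈ Ioi (0:ℝ), HasDerivAt f (f' t) t := by
    intro t ht
    have ht0 : (0:ℝ) < t := ht
    have hpow : HasDerivAt (fun s : ℝ => s ^ a) (a * t ^ (a - 1)) t :=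
      Real.hasDerivAt_rpow_const (Or.inl ht0.ne')
    have hinner : HasDerivAt (fun s : ℝ => -s - x / s) (-1 - x * -(t ^ 2)⁻¹) t := by
      have hneg : HasDerivAt (fun s : ℝ => -s) (-1) t := by
        exact hasDerivAt_neg' t
      have hdiv : HasDerivAt (fun s : ℝ => x / s) (x * -(t ^ 2)⁻¹) t := by
        simpa [div_eq_mul_inv] using (hasDerivAt_inv ht0.ne').const_mul x
      exact hneg.sub hdiv
    have hexp := hinner.exp
    have hmul := hpow.mul hexp
    refine hmul.congr_deriv ?_
    have e1 : t ^ a * (t ^ 2)⁻¹ = t ^ (a - 2) := by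
      rw [← Real.rpow_natCast t 2, ← Real.rpow_neg ht0.le, ← Real.rpow_add ht0]
      congr 1
    simp only [hf']
    rw [← e1]
    ring
  have hi1 := integrableAux (a - 1) hx
  have hi0 := integrableAux a hx
  have hi2 := integrableAux (a - 2) hx
  have hi : IntegrableOn f' (Ioi 0) := ((hi1.const_mul a).sub hi0).add (hi2.const_mul x)
  have hz := integral_deriv_zero hd hi (tendsto_zero a hx) (tendsto_top a hx)
  have hA : Integrable (fun t : ℝ => a * (t ^ (a - 1) * Real.exp (-t - x / t))
      - t ^ a * Real.exp (-t - x / t)) ((volume : Measure ℝ).restrict (Ioi 0)) :=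
    (hi1.const_mul a).sub hi0
  have hA1 : Integrable (fun t : ℝ => a * (t ^ (a - 1) * Real.exp (-t - x / t)))
      ((volume : Measure ℝ).restrict (Ioi 0)) := hi1.const_mul a
  have hB : Integrable (fun t : ℝ => x * (t ^ (a - 2) * Real.exp (-t - x / t)))
      ((volume : Measure ℝ).restrict (Ioi 0)) := hi2.const_mul x
  rw [hf'] at hz
  rw [MeasureTheory.integral_add hA hB, MeasureTheory.integral_sub hA1 hi0,
    MeasureTheory.integral_const_mul, MeasureTheory.integral_const_mul] at hz
  unfold J
  linarith [hz]

lemma rho_eq_J (ν : ℝ) : rho ν = J (ν - 1) := rfl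

theorem rho_second_order_ode (ν x : ℝ) (hx : 0 < x) :
    HasDerivAt (fun y => y ^ (ν + 1) * deriv (fun z => z ^ (-ν) * rho ν z) y) (rho ν x) x := by
  have e21 : ν - 1 - 1 = ν - 2 := by ring
  have e31 : ν - 2 - 1 = ν - 3 := by ring
  have e32 : ν - 1 - 2 = ν - 3 := by ring
  have hJ1 : ∀ {y : ℝ}, 0 < y → HasDerivAt (fun z => J (ν - 1) z) (-(J (ν - 2) y)) y := by
    intro y hy
    have h := hasDerivAt_J (ν - 1) hy
    rwa [e21] at h
  have hJ2 : ∀ {y : ℝ}, 0 < y → HasDerivAt (fun z => J (ν - 2) z) (-(J (ν - 3) y)) y := by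
    intro y hy
    have h := hasDerivAt_J (ν - 2) hy
    rwa [e31] at h
  have hderiv_inner : ∀ {y : ℝ}, 0 < y →
      HasDerivAt (fun z : ℝ => z ^ (-ν) * rho ν z)
        ((-ν) * y ^ (-ν - 1) * J (ν - 1) y + y ^ (-ν) * -(J (ν - 2) y)) y := by
    intro y hy
    have h1 : HasDerivAt (fun z : ℝ => z ^ (-ν)) ((-ν) * y ^ (-ν - 1)) y :=
      Real.hasDerivAt_rpow_const (Or.inl hy.ne')
    have h2 : HasDerivAt (fun z => rho ν z) (-(J (ν - 2) y)) y := by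
      rw [rho_eq_J]
      exact hJ1 hy
    exact h1.mul h2
  have hG : HasDerivAt (fun y : ℝ => -ν * J (ν - 1) y - y * J (ν - 2) y) (rho ν x) x := by
    have d1 := (hJ1 hx).const_mul (-ν)
    have d2 := (hasDerivAt_id x).mul (hJ2 hx)
    have d3 := d1.sub d2
    refine d3.congr_deriv ?_
    rw [rho_eq_J]
    have hr := J_rec (ν - 1) hx
    rw [e21, e32] at hr
    rw [hr]
    simp only [id_eq]
    ring
  refine hG.congr_of_eventuallyEq ?_
  filter_upwards [Ioi_mem_nhds hx] with y hy
  have hy0 : (0:ℝ) < y := hy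
  rw [(hderiv_inner hy0).deriv]
  have e1 : y ^ (ν + 1) * y ^ (-ν - 1) = 1 := by
    rw [← Real.rpow_add hy0]
    norm_num
  have e2 : y ^ (ν + 1) * y ^ (-ν) = y := by
    have h : (ν + 1) + (-ν) = 1 := by ring
    rw [← Real.rpow_add hy0, h, Real.rpow_one]
  calc y ^ (ν + 1) * ((-ν) * y ^ (-ν - 1) * J (ν - 1) y + y ^ (-ν) * -(J (ν - 2) y))
      = (y ^ (ν + 1) * y ^ (-ν - 1)) * (-ν * J (ν - 1) y)
        + (y ^ (ν + 1) * y ^ (-ν)) * (-(J (ν - 2) y)) := by ring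
    _ = -ν * J (ν - 1) y - y * J (ν - 2) y := by rw [e1, e2]; ring
end

section
/- For real ν and x > 0, ρ_ν'(x) = (ν/x) ρ_ν(x) - (1/x) ρ_(ν+1)(x), where ρ_ν(x) = ∫₀^∞ t^(ν-1) e^(-t - x/t) dt. -/
open MeasureTheory Real Set

lemma integrand_cont (s a : ℝ) :
    ContinuousOn (fun t : ℝ => t ^ s * Real.exp (-t - a / t)) (Ioi 0) := by
  apply ContinuousOn.mul
  · exact fun t ht => (Real.continuousAt_rpow_const t s (Or.inl (ne_of_gt ht))).continuousWithinAt
  · apply Real.continuous_exp.comp_continuousOn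
    exact (continuous_neg.continuousOn).sub
      (continuousOn_const.div continuousOn_id (fun t ht => ne_of_gt ht))

lemma integrand_integrable (s a : ℝ) (ha : 0 < a) :
    IntegrableOn (fun t : ℝ => t ^ s * Real.exp (-t - a / t)) (Ioi 0) := by
  rw [← Ioc_union_Ioi_eq_Ioi (zero_le_one (α := ℝ)), integrableOn_union]
  constructor
  · set n : ℕ := ⌈-s⌉₊ with hn
    have hsn : 0 ≤ s + n := by
      have := Nat.le_ceil (-s)
      have h2 : (-s : ℝ) ≤ (⌈-s⌉₊ : ℝ) := by
        rcases le_or_gt (-s) 0 with h | h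
        · exact h.trans (Nat.cast_nonneg _)
        · exact_mod_cast Nat.le_ceil _
      linarith
    apply Integrable.mono' (g := fun _ => (Nat.factorial n : ℝ) / a ^ n)
    · exact integrableOn_const measure_Ioc_lt_top.ne
    · exact ((integrand_cont s a).mono Ioc_subset_Ioi_self).aestronglyMeasurable measurableSet_Ioc
    · rw [ae_restrict_iff' measurableSet_Ioc]
      filter_upwards with t ht
      have ht0 : 0 < t := ht.1
      have hexp : Real.exp (-t - a / t) ≤ (Nat.factorial n : ℝ) * t ^ n / a ^ n := by
        have h1 : Real.exp (-t - a / t) ≤ Real.exp (-(a / t)) := by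
          apply Real.exp_le_exp.mpr; linarith [ht0.le]
        have h2 : (a / t) ^ n / Nat.factorial n ≤ Real.exp (a / t) :=
          Real.pow_div_factorial_le_exp (a/t) (by positivity) n
        have h3 : Real.exp (-(a / t)) = (Real.exp (a / t))⁻¹ := by
          rw [Real.exp_neg]
        have h4 : (0:ℝ) < (a / t) ^ n / Nat.factorial n := by positivity
        have h5 : (Real.exp (a / t))⁻¹ ≤ ((a / t) ^ n / Nat.factorial n)⁻¹ :=
          inv_anti₀ h4 h2
        have h6 : ((a / t) ^ n / (Nat.factorial n : ℝ))⁻¹ = (Nat.factorial n : ℝ) * t ^ n / a ^ n := by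
          rw [div_pow]
          field_simp
        rw [h3] at h1
        exact h1.trans (h5.trans_eq h6)
      have hnorm : ‖t ^ s * Real.exp (-t - a / t)‖ = t ^ s * Real.exp (-t - a / t) := by
        rw [Real.norm_eq_abs, abs_of_nonneg (by positivity)]
      rw [hnorm]
      calc t ^ s * Real.exp (-t - a / t) ≤ t ^ s * ((Nat.factorial n : ℝ) * t ^ n / a ^ n) := by
            apply mul_le_mul_of_nonneg_left hexp (by positivity)
        _ = (Nat.factorial n : ℝ) / a ^ n * (t ^ s * t ^ (n : ℝ)) := by
            rw [Real.rpow_natCast]; ring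
        _ = (Nat.factorial n : ℝ) / a ^ n * t ^ (s + n) := by rw [← Real.rpow_add ht0]
        _ ≤ (Nat.factorial n : ℝ) / a ^ n * 1 := by
            apply mul_le_mul_of_nonneg_left _ (by positivity)
            exact Real.rpow_le_one ht0.le ht.2 hsn
        _ = (Nat.factorial n : ℝ) / a ^ n := mul_one _
  · have hp : (0:ℝ) < max s 0 + 1 := by positivity
    apply Integrable.mono' (g := fun t : ℝ => Real.exp (-t) * t ^ (max s 0 + 1 - 1))
    · exact (Real.GammaIntegral_convergent hp).mono_set (Ioi_subset_Ioi zero_le_one)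
    · exact ((integrand_cont s a).mono (Ioi_subset_Ioi zero_le_one)).aestronglyMeasurable
        measurableSet_Ioi
    · rw [ae_restrict_iff' measurableSet_Ioi]
      filter_upwards with t ht
      have ht1 : (1:ℝ) < t := ht
      have ht0 : (0:ℝ) < t := lt_trans zero_lt_one ht1
      rw [Real.norm_eq_abs, abs_of_nonneg (by positivity)]
      have h1 : t ^ s ≤ t ^ (max s 0 + 1 - 1) := by
        apply Real.rpow_le_rpow_of_exponent_le ht1.le
        simp [le_max_left]
      have h2 : Real.exp (-t - a / t) ≤ Real.exp (-t) := by
        apply Real.exp_le_exp.mpr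
        have : 0 ≤ a / t := by positivity
        linarith
      calc t ^ s * Real.exp (-t - a / t) ≤ t ^ (max s 0 + 1 - 1) * Real.exp (-t) := by
            apply mul_le_mul h1 h2 (Real.exp_pos _).le (by positivity)
        _ = Real.exp (-t) * t ^ (max s 0 + 1 - 1) := mul_comm _ _

lemma rho_funeq (ν x : ℝ) (hx : 0 < x) : rho ν x = x ^ ν * rho (-ν) x := by
  set g : ℝ → ℝ := fun s => s ^ (ν - 1) * Real.exp (-s - x / s) with hg
  set g2 : ℝ → ℝ := fun s => s ^ (-ν - 1) * Real.exp (-s - x / s) with hg2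
  have h := integral_comp_rpow_Ioi g (p := (-1:ℝ)) (by norm_num)
  have key : (∫ u in Ioi (0:ℝ), (|(-1:ℝ)| * u ^ ((-1:ℝ) - 1)) • g (u ^ (-1:ℝ)))
      = ∫ u in Ioi (0:ℝ), x ^ (ν + 1) * g2 (x * u) := by
    apply setIntegral_congr_fun measurableSet_Ioi
    intro u hu
    have hu0 : (0:ℝ) < u := hu
    simp only [hg, hg2, smul_eq_mul, Real.rpow_neg_one]
    have e1 : (u⁻¹) ^ (ν - 1) = u ^ (1 - ν) := by
      rw [Real.inv_rpow hu0.le, ← Real.rpow_neg hu0.le]; ring_nf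
    have e2 : x / u⁻¹ = x * u := by field_simp
    have e3 : x / (x * u) = u⁻¹ := by
      rw [div_mul_eq_div_div, div_self hx.ne', one_div]
    have e4 : (x * u) ^ (-ν - 1) = x ^ (-ν - 1) * u ^ (-ν - 1) :=
      Real.mul_rpow hx.le hu0.le
    have e5 : |(-1:ℝ)| * u ^ ((-1:ℝ) - 1) = u ^ (-2:ℝ) := by norm_num
    have e6 : u ^ (-2:ℝ) * u ^ (1 - ν) = u ^ (-ν - 1) := by
      rw [← Real.rpow_add hu0]; ring_nf
    have e7 : x ^ (ν + 1) * x ^ (-ν - 1) = 1 := by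
      rw [← Real.rpow_add hx]
      have : ν + 1 + (-ν - 1) = 0 := by ring
      rw [this, Real.rpow_zero]
    rw [e1, e2, e3, e4, e5]
    calc u ^ (-2:ℝ) * (u ^ (1 - ν) * Real.exp (-u⁻¹ - x * u))
        = (u ^ (-2:ℝ) * u ^ (1 - ν)) * Real.exp (-u⁻¹ - x * u) := by ring
      _ = u ^ (-ν - 1) * Real.exp (-u⁻¹ - x * u) := by rw [e6]
      _ = (x ^ (ν + 1) * x ^ (-ν - 1)) * (u ^ (-ν - 1) * Real.exp (-(x * u) - u⁻¹)) := by
          rw [e7]; ring_nf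
      _ = x ^ (ν + 1) * (x ^ (-ν - 1) * u ^ (-ν - 1) * Real.exp (-(x * u) - u⁻¹)) := by ring
  have h2 : (∫ u in Ioi (0:ℝ), g2 (x * u)) = x⁻¹ • ∫ v in Ioi (0:ℝ), g2 v := by
    have := integral_comp_mul_left_Ioi g2 0 hx
    rwa [mul_zero] at this
  have hrho : rho ν x = ∫ y in Ioi (0:ℝ), g y := rfl
  have hrho2 : rho (-ν) x = ∫ y in Ioi (0:ℝ), g2 y := rfl
  rw [hrho, ← h, key, integral_const_mul, h2, smul_eq_mul, ← mul_assoc, hrho2]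
  congr 1
  rw [← Real.rpow_neg_one x, ← Real.rpow_add hx]
  ring_nf

lemma rho_hasDerivAt (ν x : ℝ) (hx : 0 < x) :
    HasDerivAt (fun y => rho ν y) (-(rho (ν - 1) x)) x := by
  set F : ℝ → ℝ → ℝ := fun y t => t ^ (ν - 1) * Real.exp (-t - y / t) with hF
  set F' : ℝ → ℝ → ℝ := fun y t => -(t ^ (ν - 1 - 1) * Real.exp (-t - y / t)) with hF'
  set bound : ℝ → ℝ := fun t => t ^ (ν - 1 - 1) * Real.exp (-t - (x / 2) / t) with hbound
  have hmeas : ∀ y : ℝ, AEStronglyMeasurable (F y) (volume.restrict (Ioi 0)) := fun y =>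
    (integrand_cont (ν - 1) y).aestronglyMeasurable measurableSet_Ioi
  have key := hasDerivAt_integral_of_dominated_loc_of_deriv_le (μ := volume.restrict (Ioi (0:ℝ)))
    (F := F) (F' := F') (x₀ := x) (s := Metric.ball x (x / 2)) (bound := bound) (Metric.ball_mem_nhds x (by positivity))
    (Filter.Eventually.of_forall hmeas)
    (integrand_integrable (ν - 1) x hx)
    (((integrand_cont (ν - 1 - 1) x).aestronglyMeasurable measurableSet_Ioi).neg)
    ?_ (integrand_integrable (ν - 1 - 1) (x / 2) (by positivity)) ?_
  · have : (∫ t in Ioi (0:ℝ), F' x t) = -(rho (ν - 1) x) := by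
      rw [hF', integral_neg]; rfl
    exact this ▸ key.2
  · rw [ae_restrict_iff' measurableSet_Ioi]
    filter_upwards with t ht
    intro y hy
    have ht0 : (0:ℝ) < t := ht
    have hy2 : x / 2 ≤ y := by
      have := abs_lt.mp (mem_ball_iff_norm.mp hy)
      linarith [this.1]
    simp only [hF', hbound, norm_neg, Real.norm_eq_abs]
    rw [abs_of_nonneg (by positivity)]
    apply mul_le_mul_of_nonneg_left _ (by positivity)
    apply Real.exp_le_exp.mpr
    have h : x / 2 / t ≤ y / t := by gcongr
    linarith
  · rw [ae_restrict_iff' measurableSet_Ioi]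
    filter_upwards with t ht
    intro y hy
    have ht0 : (0:ℝ) < t := ht
    have hinner : HasDerivAt (fun y : ℝ => -t - y / t) (-(1 / t)) y := by
      simpa using ((hasDerivAt_id y).div_const t).const_sub (-t)
    have h1 : HasDerivAt (fun y : ℝ => F y t)
        (t ^ (ν - 1) * (Real.exp (-t - y / t) * -(1 / t))) y :=
      (hinner.exp).const_mul _
    convert h1 using 1
    case e'_4 => rfl
    case e'_5 => rfl
    simp only [hF']
    rw [Real.rpow_sub ht0, Real.rpow_one]
    field_simp


theorem rho_deriv (ν x : ℝ) (hx : 0 < x) :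
    HasDerivAt (fun y => rho ν y) (ν / x * rho ν x - 1 / x * rho (ν + 1) x) x := by
  have hpow : HasDerivAt (fun y : ℝ => y ^ ν) (ν * x ^ (ν - 1)) x :=
    Real.hasDerivAt_rpow_const (Or.inl hx.ne')
  have hprod := hpow.mul (rho_hasDerivAt (-ν) x hx)
  have heq : (fun y => rho ν y) =ᶠ[nhds x] fun y => y ^ ν * rho (-ν) y := by
    filter_upwards [isOpen_Ioi.mem_nhds (show x ∈ Ioi (0:ℝ) from hx)] with y hy
    exact rho_funeq ν y hy
  have hD := hprod.congr_of_eventuallyEq heq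
  convert hD using 1
  case e'_4 => rfl
  case e'_5 => rfl
  have e1 : rho ν x = x ^ ν * rho (-ν) x := rho_funeq ν x hx
  have e2 : rho (ν + 1) x = x ^ (ν + 1) * rho (-ν - 1) x := by
    have := rho_funeq (ν + 1) x hx
    rwa [show -(ν + 1) = -ν - 1 by ring] at this
  rw [e1, e2]
  have e3 : x ^ (ν - 1) = x ^ ν / x := by
    rw [Real.rpow_sub hx, Real.rpow_one]
  have e4 : x ^ (ν + 1) = x ^ ν * x := Real.rpow_add_one hx.ne' ν
  rw [e3, e4]
  show ν / x * (x ^ ν * rho (-ν) x) - 1 / x * (x ^ ν * x * rho (-ν - 1) x)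
      = ν * (x ^ ν / x) * rho (-ν) x + x ^ ν * -(rho (-ν - 1) x)
  field_simp
  ring
end

section
/- Let ν ≥ 0 and α > -1, and let p(x) = x² - 2(2+α)(2+α+ν) x + (1+α)(2+α)(1+α+ν)(2+α+ν). Then ∫₀^∞ p(x) x^α ρ_ν(x) dx = 0 and ∫₀^∞ p(x) x^α ρ_(ν+1)(x) dx = 0; i.e., p is the monic type-2 multiple orthogonal polynomial p_{1,1}^α for the weights (x^α ρ_ν, x^α ρ_(ν+1)). -/
open MeasureTheory Real Set
open scoped ENNReal

section aux

variable (ν s : ℝ)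

lemma measF : Measurable (fun p : ℝ × ℝ => p.2 ^ (ν - 1) * Real.exp (-p.2 - p.1 / p.2)) := by
  fun_prop

lemma meas_rho : Measurable (rho ν) := by
  have h := (measF ν).stronglyMeasurable.integral_prod_right'
    (ν := volume.restrict (Set.Ioi (0:ℝ)))
  exact h.measurable

lemma rho_nonneg (x : ℝ) : 0 ≤ rho ν x := by
  apply setIntegral_nonneg measurableSet_Ioi
  intro t ht
  have : (0:ℝ) < t := ht
  positivity

lemma integral_x {t : ℝ} (hs : -1 < s) (ht : 0 < t) :
    ∫ x in Set.Ioi (0:ℝ), x ^ s * Real.exp (-(1/t) * x) = t ^ (s+1) * Real.Gamma (s+1) := by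
  have h := integral_rpow_mul_exp_neg_mul_rpow (p := 1) (q := s) (b := 1/t)
    one_pos hs (by positivity)
  simp only [Real.rpow_one, div_one] at h
  have hb : ((1:ℝ)/t) ^ (-(s+1)) = t ^ (s+1) := by
    rw [one_div, Real.inv_rpow ht.le, ← Real.rpow_neg ht.le, neg_neg]
  rw [h, hb, mul_one]

lemma moment_lintegral (hν : 0 ≤ ν) (hs : -1 < s) :
    ∫⁻ x in Set.Ioi (0:ℝ), ENNReal.ofReal (x ^ s * rho ν x) =
      ENNReal.ofReal (Real.Gamma (s+1) * Real.Gamma (s+ν+1)) := by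
  set μ := volume.restrict (Set.Ioi (0:ℝ)) with hμ
  set g : ℝ → ℝ → ℝ≥0∞ :=
    fun x t => ENNReal.ofReal (x ^ s * (t ^ (ν-1) * Real.exp (-t - x/t))) with hg
  have hmeas : Measurable (Function.uncurry g) := by
    apply ENNReal.measurable_ofReal.comp
    show Measurable fun p : ℝ × ℝ =>
      p.1 ^ s * (p.2 ^ (ν-1) * Real.exp (-p.2 - p.1/p.2))
    fun_prop
  have hswap : ∫⁻ x, ∫⁻ t, g x t ∂μ ∂μ = ∫⁻ t, ∫⁻ x, g x t ∂μ ∂μ :=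
    lintegral_lintegral_swap hmeas.aemeasurable
  have hGpos : 0 < Real.Gamma (s+1) := Real.Gamma_pos_of_pos (by linarith)
  have hJ : ∫⁻ t, ∫⁻ x, g x t ∂μ ∂μ =
      ENNReal.ofReal (Real.Gamma (s+1) * Real.Gamma (s+ν+1)) := by
    have hinner : ∀ t ∈ Set.Ioi (0:ℝ), ∫⁻ x, g x t ∂μ =
        ENNReal.ofReal (Real.Gamma (s+1) * (t ^ (s+ν) * Real.exp (-t))) := by
      intro t ht
      have ht' : (0:ℝ) < t := ht
      have hpt : ∀ x : ℝ, g x t =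
          ENNReal.ofReal ((t ^ (ν-1) * Real.exp (-t)) * (x ^ s * Real.exp (-(1/t) * x))) := by
        intro x
        show ENNReal.ofReal (x ^ s * (t ^ (ν-1) * Real.exp (-t - x/t))) = _
        congr 1
        rw [show -t - x/t = -t + (-(1/t)*x) by ring, Real.exp_add]
        ring
      simp_rw [hpt]
      have hc : 0 ≤ t ^ (ν-1) * Real.exp (-t) := by positivity
      simp_rw [ENNReal.ofReal_mul hc]
      rw [lintegral_const_mul' _ _ ENNReal.ofReal_ne_top]
      have hint : IntegrableOn (fun x : ℝ => x ^ s * Real.exp (-(1/t) * x)) (Set.Ioi 0) := by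
        have := integrableOn_rpow_mul_exp_neg_mul_rpow (p := 1) (s := s) (b := 1/t)
          hs one_pos (by positivity)
        simpa [Real.rpow_one] using this
      have hnn : 0 ≤ᵐ[μ] fun x : ℝ => x ^ s * Real.exp (-(1/t) * x) := by
        filter_upwards [ae_restrict_mem measurableSet_Ioi] with x hx
        have : (0:ℝ) < x := hx
        positivity
      rw [← ofReal_integral_eq_lintegral_ofReal hint hnn, integral_x s hs ht',
        ← ENNReal.ofReal_mul hc]
      congr 1
      rw [show t ^ (ν-1) * Real.exp (-t) * (t ^ (s+1) * Real.Gamma (s+1))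
          = Real.Gamma (s+1) * ((t ^ (ν-1) * t ^ (s+1)) * Real.exp (-t)) by ring,
        ← Real.rpow_add ht', show ν - 1 + (s+1) = s + ν by ring]
    rw [setLIntegral_congr_fun measurableSet_Ioi hinner]
    have hnn2 : 0 ≤ᵐ[μ] fun t : ℝ => t ^ (s+ν) * Real.exp (-t) := by
      filter_upwards [ae_restrict_mem measurableSet_Ioi] with t ht
      have : (0:ℝ) < t := ht
      positivity
    have hint2 : IntegrableOn (fun t : ℝ => t ^ (s+ν) * Real.exp (-t)) (Set.Ioi 0) := by
      have := integrableOn_rpow_mul_exp_neg_mul_rpow (p := 1) (s := s+ν) (b := 1)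
        (by linarith) one_pos one_pos
      simpa [Real.rpow_one] using this
    simp_rw [ENNReal.ofReal_mul hGpos.le]
    rw [lintegral_const_mul' _ _ ENNReal.ofReal_ne_top,
      ← ofReal_integral_eq_lintegral_ofReal hint2 hnn2]
    have hval : ∫ t in Set.Ioi (0:ℝ), t ^ (s+ν) * Real.exp (-t) = Real.Gamma (s+ν+1) := by
      have := Real.integral_rpow_mul_exp_neg_mul_Ioi (a := s+ν+1) (r := 1)
        (by linarith) one_pos
      simpa using this
    rw [hval, ← ENNReal.ofReal_mul hGpos.le]
  have hImeas : Measurable fun x => ∫⁻ t, g x t ∂μ :=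
    hmeas.lintegral_prod_right'
  have hfin : ∀ᵐ x ∂μ, ∫⁻ t, g x t ∂μ < ∞ := by
    apply ae_lt_top hImeas
    rw [hswap, hJ]
    exact ENNReal.ofReal_ne_top
  have hmain : ∫⁻ x, ENNReal.ofReal (x ^ s * rho ν x) ∂μ = ∫⁻ x, ∫⁻ t, g x t ∂μ ∂μ := by
    apply lintegral_congr_ae
    filter_upwards [ae_restrict_mem measurableSet_Ioi, hfin] with x hx hfx
    have hx' : (0:ℝ) < x := hx
    have hxs : 0 < x ^ s := Real.rpow_pos_of_pos hx' s
    have hsplit : ∫⁻ t, g x t ∂μ =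
        ENNReal.ofReal (x ^ s) * ∫⁻ t, ENNReal.ofReal (t ^ (ν-1) * Real.exp (-t - x/t)) ∂μ := by
      simp_rw [hg, ENNReal.ofReal_mul hxs.le]
      rw [lintegral_const_mul' _ _ ENNReal.ofReal_ne_top]
    set L := ∫⁻ t, ENNReal.ofReal (t ^ (ν-1) * Real.exp (-t - x/t)) ∂μ with hL
    have hLfin : L ≠ ∞ := by
      intro hLtop
      rw [hsplit, hLtop, ENNReal.mul_top (by simp [ENNReal.ofReal_eq_zero, not_le, hxs])] at hfx
      exact (lt_irrefl _ hfx)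
    have hrnn : 0 ≤ᵐ[μ] fun t : ℝ => t ^ (ν-1) * Real.exp (-t - x/t) := by
      filter_upwards [ae_restrict_mem measurableSet_Ioi] with t ht
      have : (0:ℝ) < t := ht
      positivity
    have hrm : AEStronglyMeasurable (fun t : ℝ => t ^ (ν-1) * Real.exp (-t - x/t)) μ := by
      apply Measurable.aestronglyMeasurable; fun_prop
    have hrho : rho ν x = L.toReal := by
      rw [rho, integral_eq_lintegral_of_nonneg_ae hrnn hrm]
    rw [hrho, hsplit, ENNReal.ofReal_mul hxs.le, ENNReal.ofReal_toReal hLfin]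
  rw [hmain, hswap, hJ]

lemma moment_nonneg_ae : 0 ≤ᵐ[volume.restrict (Set.Ioi (0:ℝ))] fun x : ℝ => x ^ s * rho ν x := by
  filter_upwards [ae_restrict_mem measurableSet_Ioi] with x hx
  have hx' : (0:ℝ) < x := hx
  exact mul_nonneg (Real.rpow_pos_of_pos hx' s).le (rho_nonneg ν x)

lemma moment_meas : AEStronglyMeasurable (fun x : ℝ => x ^ s * rho ν x)
    (volume.restrict (Set.Ioi (0:ℝ))) := by
  apply Measurable.aestronglyMeasurable
  have h : Measurable fun x : ℝ => x ^ s := by fun_prop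
  exact h.mul (meas_rho ν)

lemma moment_integrable (hν : 0 ≤ ν) (hs : -1 < s) :
    IntegrableOn (fun x : ℝ => x ^ s * rho ν x) (Set.Ioi 0) := by
  refine ⟨moment_meas ν s, ?_⟩
  rw [hasFiniteIntegral_iff_ofReal (moment_nonneg_ae ν s), moment_lintegral ν s hν hs]
  exact ENNReal.ofReal_lt_top

lemma moment (hν : 0 ≤ ν) (hs : -1 < s) :
    ∫ x in Set.Ioi (0:ℝ), x ^ s * rho ν x = Real.Gamma (s+1) * Real.Gamma (s+ν+1) := by
  rw [integral_eq_lintegral_of_nonneg_ae (moment_nonneg_ae ν s) (moment_meas ν s),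
    moment_lintegral ν s hν hs, ENNReal.toReal_ofReal]
  exact mul_nonneg (Real.Gamma_pos_of_pos (by linarith)).le
    (Real.Gamma_pos_of_pos (by linarith)).le

end aux

lemma poly_integral (w α b c : ℝ) (hw : 0 ≤ w) (hα : -1 < α) :
    ∫ x in Set.Ioi (0:ℝ), (x ^ 2 - b * x + c) * x ^ α * rho w x
      = (Real.Gamma (α+2+1) * Real.Gamma (α+2+w+1)
        - b * (Real.Gamma (α+1+1) * Real.Gamma (α+1+w+1)))
        + c * (Real.Gamma (α+1) * Real.Gamma (α+w+1)) := by
  have i0 := moment_integrable w α hw hα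
  have i1 := moment_integrable w (α+1) hw (by linarith)
  have i2 := moment_integrable w (α+2) hw (by linarith)
  have key : ∀ x ∈ Set.Ioi (0:ℝ),
      (x ^ 2 - b * x + c) * x ^ α * rho w x
        = (x ^ (α+2) * rho w x - b * (x ^ (α+1) * rho w x)) + c * (x ^ α * rho w x) := by
    intro x hx
    have hx' : (0:ℝ) < x := hx
    have e2 : x ^ (α+2) = x ^ α * x ^ 2 := by
      rw [Real.rpow_add hx', show (2:ℝ) = ((2:ℕ):ℝ) by norm_num, Real.rpow_natCast]
    have e1 : x ^ (α+1) = x ^ α * x := by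
      rw [Real.rpow_add hx', Real.rpow_one]
    rw [e2, e1]; ring
  have j1 : IntegrableOn
      (fun x : ℝ => x ^ (α+2) * rho w x - b * (x ^ (α+1) * rho w x)) (Set.Ioi 0) :=
    i2.sub (i1.const_mul b)
  have j0 : IntegrableOn (fun x : ℝ => c * (x ^ α * rho w x)) (Set.Ioi 0) :=
    i0.const_mul c
  rw [setIntegral_congr_fun measurableSet_Ioi key,
    integral_add j1 j0,
    integral_sub i2 (i1.const_mul b), integral_const_mul, integral_const_mul,
    moment w α hw hα, moment w (α+1) hw (by linarith), moment w (α+2) hw (by linarith)]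

theorem type2_p11 (ν α : ℝ) (hν : 0 ≤ ν) (hα : -1 < α) :
    (∫ x in Set.Ioi (0:ℝ),
        (x ^ 2 - 2 * (2 + α) * (2 + α + ν) * x
          + (1 + α) * (2 + α) * (1 + α + ν) * (2 + α + ν)) * x ^ α * rho ν x = 0) ∧
    (∫ x in Set.Ioi (0:ℝ),
        (x ^ 2 - 2 * (2 + α) * (2 + α + ν) * x
          + (1 + α) * (2 + α) * (1 + α + ν) * (2 + α + ν)) * x ^ α * rho (ν + 1) x = 0) := by
  have hA1 : Real.Gamma (α+1+1) = (α+1) * Real.Gamma (α+1) :=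
    Real.Gamma_add_one (by linarith)
  have hA2 : Real.Gamma (α+2+1) = (α+2) * ((α+1) * Real.Gamma (α+1)) := by
    rw [show α+2+1 = (α+1+1)+1 by ring, Real.Gamma_add_one (by linarith), hA1]; ring
  constructor
  · rw [poly_integral ν α _ _ hν hα]
    have hB1 : Real.Gamma (α+1+ν+1) = (α+ν+1) * Real.Gamma (α+ν+1) := by
      rw [show α+1+ν+1 = (α+ν+1)+1 by ring, Real.Gamma_add_one (by linarith)]
    have hB2 : Real.Gamma (α+2+ν+1) = (α+ν+2) * ((α+ν+1) * Real.Gamma (α+ν+1)) := by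
      rw [show α+2+ν+1 = ((α+ν+1)+1)+1 by ring, Real.Gamma_add_one (by linarith),
        Real.Gamma_add_one (by linarith), show α+ν+1+1 = α+ν+2 by ring]
    rw [hA1, hA2, hB1, hB2]; ring
  · rw [poly_integral (ν+1) α _ _ (by linarith) hα]
    have hB0 : Real.Gamma (α+(ν+1)+1) = Real.Gamma (α+ν+2) := by ring_nf
    have hB1 : Real.Gamma (α+1+(ν+1)+1) = (α+ν+2) * Real.Gamma (α+ν+2) := by
      rw [show α+1+(ν+1)+1 = (α+ν+2)+1 by ring, Real.Gamma_add_one (by linarith)]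
    have hB2 : Real.Gamma (α+2+(ν+1)+1) = (α+ν+3) * ((α+ν+2) * Real.Gamma (α+ν+2)) := by
      rw [show α+2+(ν+1)+1 = ((α+ν+2)+1)+1 by ring, Real.Gamma_add_one (by linarith),
        Real.Gamma_add_one (by linarith), show α+ν+2+1 = α+ν+3 by ring]
    rw [hA1, hA2, hB0, hB1, hB2]; ring
end
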